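/- For a finite two-player type space, the following are mutually exclusive and exhaustive: (1) there exists a probability distribution p lying in conv{t₁(ω,·) : ω ∈ Ω} ∩ conv{t₂(ω,·) : ω ∈ Ω}; (2) there exists f : Ω → ℝ such that Σ_{ω'} f(ω') t₁(ω,{ω'}) > 0 and Σ_{ω'} f(ω') t₂(ω,{ω'}) < 0 for every ω ∈ Ω. -/

import Mathlib

open Finset

lemma clm_repr {Ω : Type*} [Fintype Ω] [DecidableEq Ω]
    (g : (Ω → ℝ) →L[ℝ] ℝ) (x : Ω → ℝ) :
    g x = ∑ a, x a * g (Pi.single a 1) := by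
  have hx : x = ∑ a, x a • (Pi.single a 1 : Ω → ℝ) := by
    funext b
    simp [Finset.sum_apply, Pi.single_apply, mul_comm]
  conv_lhs => rw [hx]
  rw [map_sum]
  simp [smul_eq_mul]

lemma shift_sum {Ω : Type*} [Fintype Ω] [DecidableEq Ω]
    (g : (Ω → ℝ) →L[ℝ] ℝ) (c : ℝ) (x : Ω → ℝ) (hx : ∑ a, x a = 1) :
    ∑ a, (g (Pi.single a 1) - c) * x a = g x - c := by
  have : ∑ a, (g (Pi.single a 1) - c) * x a
      = (∑ a, x a * g (Pi.single a 1)) - c * ∑ a, x a := by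
    rw [Finset.mul_sum, ← Finset.sum_sub_distrib]
    exact Finset.sum_congr rfl fun a _ => by ring
  rw [this, ← clm_repr, hx, mul_one]

/-- the finite no-bet theorem for two players.  Exactly one of the following
holds: (1) some probability distribution lies in the convex hulls of both players' types
(beliefs are consistent); (2) there is an agreeable bet `(f, −f)`. -/
theorem stmt_9 {Ω : Type*} [Fintype Ω] [DecidableEq Ω] [Nonempty Ω]
    (r1 r2 : Ω → Ω → Prop) (hr1 : Equivalence r1) (hr2 : Equivalence r2)
    (t1 t2 : Ω → Ω → ℝ)
    (h10 : ∀ ω a, 0 ≤ t1 ω a) (h11 : ∀ ω, ∑ a, t1 ω a = 1)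
    (h20 : ∀ ω a, 0 ≤ t2 ω a) (h21 : ∀ ω, ∑ a, t2 ω a = 1)
    (h1c : ∀ ω ω', r1 ω ω' → t1 ω = t1 ω') (h1s : ∀ ω a, ¬ r1 ω a → t1 ω a = 0)
    (h2c : ∀ ω ω', r2 ω ω' → t2 ω = t2 ω') (h2s : ∀ ω a, ¬ r2 ω a → t2 ω a = 0) :
    Xor'
      (∃ p : Ω → ℝ, p ∈ convexHull ℝ (Set.range t1) ∧ p ∈ convexHull ℝ (Set.range t2))
      (∃ f : Ω → ℝ, ∀ ω, (0 < ∑ a, f a * t1 ω a) ∧ (∑ a, f a * t2 ω a < 0)) := by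
  have hexcl : ¬ ((∃ p : Ω → ℝ, p ∈ convexHull ℝ (Set.range t1) ∧
        p ∈ convexHull ℝ (Set.range t2)) ∧
      (∃ f : Ω → ℝ, ∀ ω, (0 < ∑ a, f a * t1 ω a) ∧ (∑ a, f a * t2 ω a < 0))) := by
    rintro ⟨⟨p, hp1, hp2⟩, f, hf⟩
    have hlin : IsLinearMap ℝ (fun x : Ω → ℝ => ∑ a, f a * x a) := by
      constructor
      · intro x y; simp [mul_add, Finset.sum_add_distrib]
      · intro c x; simp [Finset.mul_sum, mul_left_comm]
    have hpos : p ∈ {x : Ω → ℝ | 0 < ∑ a, f a * x a} := by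
      refine convexHull_min ?_ (convex_halfSpace_gt hlin 0) hp1
      rintro _ ⟨ω, rfl⟩; exact (hf ω).1
    have hneg : p ∈ {x : Ω → ℝ | ∑ a, f a * x a < 0} := by
      refine convexHull_min ?_ (convex_halfSpace_lt hlin 0) hp2
      rintro _ ⟨ω, rfl⟩; exact (hf ω).2
    exact absurd hpos.out (not_lt.2 hneg.out.le)
  by_cases hP : (∃ p : Ω → ℝ, p ∈ convexHull ℝ (Set.range t1) ∧
      p ∈ convexHull ℝ (Set.range t2))
  · exact Or.inl ⟨hP, fun hQ => hexcl ⟨hP, hQ⟩⟩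
  · refine Or.inr ⟨?_, hP⟩
    have hfin1 : (Set.range t1).Finite := Set.finite_range _
    have hfin2 : (Set.range t2).Finite := Set.finite_range _
    have hdisj : Disjoint (convexHull ℝ (Set.range t2)) (convexHull ℝ (Set.range t1)) := by
      rw [Set.disjoint_left]
      intro p hp2 hp1
      exact hP ⟨p, hp1, hp2⟩
    obtain ⟨g, u, v, hgu, huv, hvg⟩ :=
      geometric_hahn_banach_compact_closed (convex_convexHull ℝ _)
        (hfin2.isCompact_convexHull ℝ) (convex_convexHull ℝ _)
        (hfin1.isClosed_convexHull ℝ) hdisj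
    set c := (u + v) / 2 with hc
    refine ⟨fun a => g (Pi.single a 1) - c, fun ω => ?_⟩
    have h1m : t1 ω ∈ convexHull ℝ (Set.range t1) :=
      subset_convexHull ℝ _ (Set.mem_range_self ω)
    have h2m : t2 ω ∈ convexHull ℝ (Set.range t2) :=
      subset_convexHull ℝ _ (Set.mem_range_self ω)
    have hgt : v < g (t1 ω) := hvg _ h1m
    have hlt : g (t2 ω) < u := hgu _ h2m
    constructor
    · rw [shift_sum g c (t1 ω) (h11 ω)]
      have : c < v := by rw [hc]; linarith
      linarith
    · rw [shift_sum g c (t2 ω) (h21 ω)]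
      have : u < c := by rw [hc]; linarith
      linarith
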